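/- Let p be a positive integer. If S is an ℕ^p-semigroup with S ≠ {0} and S ≠ ℕ^p, then the embedding dimension of S satisfies e(S) ≥ 2p. -/

import Mathlib

/-- `S ⊆ ℕ^p` contains `0` and is closed under addition. -/
def IsSubmonoidSet {p : ℕ} (S : Set (Fin p → ℕ)) : Prop :=
  (0 : Fin p → ℕ) ∈ S ∧ ∀ x ∈ S, ∀ y ∈ S, x + y ∈ S

/-- `s` is a minimal generator of `S`: it is a nonzero element of `S` that is not a
sum of two nonzero elements of `S`. -/
def IsMinGen {p : ℕ} (S : Set (Fin p → ℕ)) (s : Fin p → ℕ) : Prop :=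
  s ∈ S ∧ s ≠ 0 ∧ ∀ a ∈ S, ∀ b ∈ S, a ≠ 0 → b ≠ 0 → a + b ≠ s

/-- The (unique) minimal generating set of `S`. -/
def minGens {p : ℕ} (S : Set (Fin p → ℕ)) : Set (Fin p → ℕ) :=
  {s | IsMinGen S s}

section Aux

variable {p : ℕ} {S : Set (Fin p → ℕ)}

lemma smul_mem_aux (hS : IsSubmonoidSet S) {v : Fin p → ℕ} (hv : v ∈ S) (k : ℕ) :
    k • v ∈ S := by
  induction k with
  | zero => simpa using hS.1
  | succ n ih =>
    rw [succ_nsmul]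
    exact hS.2 _ ih _ hv

lemma sum_mem_aux (hS : IsSubmonoidSet S) {ι : Type} [DecidableEq ι] (t : Finset ι)
    (f : ι → (Fin p → ℕ)) (hf : ∀ j ∈ t, f j ∈ S) : ∑ j ∈ t, f j ∈ S := by
  induction t using Finset.induction with
  | empty => simpa using hS.1
  | insert _ _ h ih =>
    rw [Finset.sum_insert h]
    exact hS.2 _ (hf _ (Finset.mem_insert_self _ _)) _
      (ih fun j hj => hf j (Finset.mem_insert_of_mem hj))

lemma line_finite (hfin : {x : Fin p → ℕ | x ∉ S}.Finite) (g : Fin p → ℕ) (i : Fin p) :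
    {k : ℕ | g + k • Pi.single i (1:ℕ) ∉ S}.Finite := by
  have hinj : Function.Injective (fun k : ℕ => g + k • Pi.single i (1:ℕ)) := by
    intro a b hab
    have := congrFun hab i
    simp at this
    omega
  have heq : {k : ℕ | g + k • Pi.single i (1:ℕ) ∉ S}
      = (fun k : ℕ => g + k • Pi.single i (1:ℕ)) ⁻¹' {x | x ∉ S} := rfl
  rw [heq]
  exact Set.Finite.preimage hinj.injOn hfin

lemma exists_notmem_ge {A : Set ℕ} (hA : A.Finite) (n : ℕ) : ∃ k, n ≤ k ∧ k ∉ A := by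
  obtain ⟨b, hb⟩ := hA.bddAbove
  refine ⟨max n (b+1), le_max_left _ _, fun hk => ?_⟩
  have h1 := hb hk
  have h2 := le_max_right n (b+1)
  omega

lemma axis_minGen (hS : IsSubmonoidSet S) (i : Fin p) {k : ℕ} (hk1 : 1 ≤ k)
    (hkS : k • Pi.single i (1:ℕ) ∈ S)
    (hmin : ∀ a b : ℕ, 1 ≤ a → 1 ≤ b → a + b = k → a • Pi.single i (1:ℕ) ∈ S →
      b • Pi.single i (1:ℕ) ∈ S → False) :
    IsMinGen S (k • Pi.single i (1:ℕ)) := by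
  refine ⟨hkS, ?_, ?_⟩
  · intro h
    have := congrFun h i
    simp at this
    omega
  · intro a ha b hb ha0 hb0 hab
    have hax : ∀ j, j ≠ i → a j = 0 ∧ b j = 0 := by
      intro j hj
      have := congrFun hab j
      simp [Pi.single_apply, hj] at this
      omega
    have haeq : a = (a i) • Pi.single i (1:ℕ) := by
      funext j
      by_cases hj : j = i
      · subst hj; simp
      · simp [Pi.single_apply, hj, (hax j hj).1]
    have hbeq : b = (b i) • Pi.single i (1:ℕ) := by
      funext j
      by_cases hj : j = i
      · subst hj; simp
      · simp [Pi.single_apply, hj, (hax j hj).2]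
    have hai : 1 ≤ a i := by
      rcases Nat.eq_zero_or_pos (a i) with h | h
      swap
      · exact h
      · exact absurd (by rw [haeq, h, zero_smul]) ha0
    have hbi : 1 ≤ b i := by
      rcases Nat.eq_zero_or_pos (b i) with h | h
      swap
      · exact h
      · exact absurd (by rw [hbeq, h, zero_smul]) hb0
    have hsum : a i + b i = k := by
      have := congrFun hab i
      simp at this
      omega
    exact hmin (a i) (b i) hai hbi hsum (haeq ▸ ha) (hbeq ▸ hb)

lemma exists_stripped_gap (hS : IsSubmonoidSet S) (huniv : S ≠ Set.univ) :
    ∃ g : Fin p → ℕ, g ∉ S ∧ ∀ j, Pi.single j (1:ℕ) ∈ S → g j = 0 := by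
  classical
  have hex : ∃ h, h ∉ S := by
    by_contra hc
    push_neg at hc
    exact huniv (Set.eq_univ_iff_forall.mpr hc)
  obtain ⟨h, hh⟩ := hex
  refine ⟨fun j => if Pi.single j (1:ℕ) ∈ S then 0 else h j, ?_, fun j hj => by simp [hj]⟩
  intro hgS
  apply hh
  have hrepr : h = (fun j => if Pi.single j (1:ℕ) ∈ S then 0 else h j)
      + ∑ j : Fin p, (if Pi.single j (1:ℕ) ∈ S then (h j) • Pi.single j (1:ℕ) else 0) := by
    funext k
    have hterm : ∀ j, ((if Pi.single j (1:ℕ) ∈ S then (h j) • Pi.single j (1:ℕ)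
        else 0) : Fin p → ℕ) k = if j = k then (if Pi.single j (1:ℕ) ∈ S then h j else 0)
        else 0 := by
      intro j
      by_cases hj : j = k
      · subst hj
        by_cases hjs : Pi.single j (1:ℕ) ∈ S <;> simp [hjs]
      · by_cases hjs : Pi.single j (1:ℕ) ∈ S <;> simp [hj, hjs, Pi.single_apply]
    simp only [Pi.add_apply, Finset.sum_apply, hterm,
      Finset.sum_ite_eq' Finset.univ k, Finset.mem_univ, if_true]
    by_cases hks : Pi.single k (1:ℕ) ∈ S <;> simp [hks]
  rw [hrepr]
  refine hS.2 _ hgS _ (sum_mem_aux hS _ _ (fun j _ => ?_))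
  by_cases hjs : Pi.single j (1:ℕ) ∈ S
  · simpa [hjs] using smul_mem_aux hS hjs (h j)
  · simpa [hjs] using hS.1

end Aux

section Main

variable {p : ℕ} {S : Set (Fin p → ℕ)}

lemma exists_two_gens (hS : IsSubmonoidSet S) (hfin : {x : Fin p → ℕ | x ∉ S}.Finite)
    (huniv : S ≠ Set.univ) (i : Fin p) :
    ∃ g₁ g₂ : Fin p → ℕ, IsMinGen S g₁ ∧ IsMinGen S g₂ ∧
      1 ≤ g₁ i ∧ (∀ j, j ≠ i → g₁ j = 0) ∧ 1 ≤ g₂ i ∧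
      (∀ j, j ≠ i → Pi.single j (1:ℕ) ∈ S → g₂ j = 0) ∧
      (Pi.single i (1:ℕ) ∉ S → ∀ j, j ≠ i → g₂ j = 0) ∧ g₁ ≠ g₂ := by
  classical
  by_cases hi : Pi.single i (1:ℕ) ∈ S
  · -- e i ∈ S : take e i and the constructed off-axis generator
    obtain ⟨g, hgS, hg0⟩ := exists_stripped_gap hS huniv
    have hex : ∃ k : ℕ, g + k • Pi.single i (1:ℕ) ∈ S := by
      obtain ⟨k, -, hk⟩ := exists_notmem_ge (line_finite hfin g i) 0
      exact ⟨k, not_not.mp hk⟩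
    set k := Nat.find hex with hkdef
    have hkS := Nat.find_spec hex
    rw [← hkdef] at hkS
    have hk1 : 1 ≤ k := by
      by_contra h
      have hk0 : k = 0 := by omega
      rw [hk0] at hkS
      simp at hkS
      exact hgS hkS
    have hyP' : ∃ y : Fin p → ℕ,
        y ∉ S ∧ (∀ j, j ≠ i → Pi.single j (1:ℕ) ∈ S → y j = 0)
        ∧ y + Pi.single i (1:ℕ) ∈ S := by
      refine ⟨g + (k-1) • Pi.single i (1:ℕ), ?_, ?_, ?_⟩
      · exact Nat.find_min hex (show k - 1 < k by omega)
      · intro j hj hjS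
        simp [hg0 j hjS, Pi.single_apply, hj]
      · have heq : g + (k-1) • Pi.single i (1:ℕ) + Pi.single i (1:ℕ)
            = g + k • Pi.single i (1:ℕ) := by
          rw [add_assoc]
          congr 1
          rw [← succ_nsmul]
          congr 1
          omega
        rw [heq]
        exact hkS
    have hyP : ∃ nsum : ℕ, ∃ y : Fin p → ℕ,
        (y ∉ S ∧ (∀ j, j ≠ i → Pi.single j (1:ℕ) ∈ S → y j = 0)
        ∧ y + Pi.single i (1:ℕ) ∈ S) ∧ ∑ j, y j = nsum := by
      obtain ⟨y, hy⟩ := hyP'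
      exact ⟨∑ j, y j, y, hy, rfl⟩
    set ns := Nat.find hyP with hnsdef
    obtain ⟨x, ⟨hxS, hx0, hxiS⟩, hxsum⟩ := Nat.find_spec hyP
    have hxmin : ∀ z : Fin p → ℕ, z ∉ S → (∀ j, j ≠ i → Pi.single j (1:ℕ) ∈ S → z j = 0)
        → z + Pi.single i (1:ℕ) ∈ S → ∑ j, x j ≤ ∑ j, z j := by
      intro z h1 h2 h3
      rcases Nat.lt_or_ge (∑ j, z j) ns with h | h
      · exact absurd ⟨z, ⟨h1, h2, h3⟩, rfl⟩ (Nat.find_min hyP h)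
      · omega
    have key : ∀ a b : Fin p → ℕ, a ∈ S → b ∈ S → b ≠ 0 → 1 ≤ a i →
        a + b ≠ x + Pi.single i (1:ℕ) := by
      intro a b ha hb hb0 hai hab
      set a' : Fin p → ℕ := Function.update a i (a i - 1) with ha'
      have haa' : a' + Pi.single i (1:ℕ) = a := by
        funext j
        by_cases hj : j = i
        · subst hj
          simp [ha', Function.update_self]
          omega
        · simp [ha', Function.update_of_ne hj, Pi.single_apply, hj]
      have hxi : a i + b i = x i + 1 := by
        have := congrFun hab i
        simpa using this
      have hxeq : a' + b = x := by
        funext j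
        by_cases hj : j = i
        · subst hj
          simp [ha', Function.update_self]
          omega
        · have hcf := congrFun hab j
          simp [Pi.single_apply, hj] at hcf
          simp [ha', Function.update_of_ne hj, hcf]
      have ha'S : a' ∉ S := fun h => hxS (hxeq ▸ hS.2 _ h _ hb)
      have ha'0 : ∀ j, j ≠ i → Pi.single j (1:ℕ) ∈ S → a' j = 0 := by
        intro j hj hjS
        have h1 := congrFun hab j
        have h2 := hx0 j hj hjS
        simp [Pi.single_apply, hj, h2] at h1
        simp [ha', Function.update_of_ne hj]
        omega
      have hmin := hxmin a' ha'S ha'0 (haa' ▸ ha)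
      have hsums : ∑ j, a' j + ∑ j, b j = ∑ j, x j := by
        rw [← Finset.sum_add_distrib]
        exact Finset.sum_congr rfl fun j _ => congrFun hxeq j
      have hbpos : 1 ≤ ∑ j, b j := by
        have hbj : ∃ j, b j ≠ 0 := by
          by_contra h
          push_neg at h
          exact hb0 (funext h)
        obtain ⟨j, hj⟩ := hbj
        calc 1 ≤ b j := by omega
          _ ≤ ∑ j, b j := Finset.single_le_sum (fun _ _ => Nat.zero_le _) (Finset.mem_univ j)
      omega
    have hg2 : IsMinGen S (x + Pi.single i (1:ℕ)) := by
      refine ⟨hxiS, ?_, ?_⟩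
      · intro h
        have := congrFun h i
        simp at this
      · intro a ha b hb ha0 hb0 hab
        have hab_i : a i + b i = x i + 1 := by
          have := congrFun hab i
          simpa using this
        rcases Nat.lt_or_ge (a i) 1 with h | h
        · have hbi : 1 ≤ b i := by omega
          exact key b a hb ha ha0 hbi (by rwa [add_comm] at hab)
        · exact key a b ha hb hb0 h hab
    have hxj : ∃ j, j ≠ i ∧ x j ≠ 0 := by
      by_contra h
      push_neg at h
      apply hxS
      have hxe : x = (x i) • Pi.single i (1:ℕ) := by
        funext j
        by_cases hj : j = i
        · subst hj; simp
        · simp [Pi.single_apply, hj, h j hj]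
      rw [hxe]
      exact smul_mem_aux hS hi (x i)
    obtain ⟨j0, hj0, hxj0⟩ := hxj
    have hg1 : IsMinGen S (Pi.single i (1:ℕ)) := by
      refine ⟨hi, ?_, ?_⟩
      · intro h
        have := congrFun h i
        simp at this
      · intro a ha b hb ha0 hb0 hab
        have h1 : a i + b i = 1 := by
          have := congrFun hab i
          simpa using this
        have h2 : ∀ j, j ≠ i → a j = 0 ∧ b j = 0 := by
          intro j hj
          have := congrFun hab j
          simp [Pi.single_apply, hj] at this
          omega
        rcases Nat.lt_or_ge (a i) 1 with h | h
        · apply ha0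
          funext j
          by_cases hj : j = i
          · subst hj
            simp
            omega
          · simpa using (h2 j hj).1
        · apply hb0
          funext j
          by_cases hj : j = i
          · subst hj
            simp
            omega
          · simpa using (h2 j hj).2
    refine ⟨Pi.single i (1:ℕ), x + Pi.single i (1:ℕ), hg1, hg2, by simp, ?_, ?_, ?_, ?_, ?_⟩
    · intro j hj
      simp [Pi.single_apply, hj]
    · simp
    · intro j hj hjS
      simp [Pi.single_apply, hj, hx0 j hj hjS]
    · intro h
      exact absurd hi h
    · intro h
      have := congrFun h j0
      simp [Pi.single_apply, hj0] at this
      exact hxj0 this.symm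
  · -- e i ∉ S : two generators on the i-th axis
    have hPm : ∃ k, 1 ≤ k ∧ k • Pi.single i (1:ℕ) ∈ S := by
      obtain ⟨k, hk1, hk⟩ := exists_notmem_ge (line_finite hfin 0 i) 1
      simp only [Set.mem_setOf_eq, not_not, zero_add] at hk
      exact ⟨k, hk1, hk⟩
    set m := Nat.find hPm with hmdef
    obtain ⟨hm1, hmS⟩ := Nat.find_spec hPm
    rw [← hmdef] at hm1 hmS
    have hm2 : 2 ≤ m := by
      by_contra h
      have hm1' : m = 1 := by omega
      rw [hm1', one_smul] at hmS
      exact hi hmS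
    have hg1 : IsMinGen S (m • Pi.single i (1:ℕ)) := by
      refine axis_minGen hS i hm1 hmS ?_
      intro a b ha hb habk haS hbS
      exact Nat.find_min hPm (show a < m by omega) ⟨ha, haS⟩
    have hA : ((fun j : ℕ => j * m + 1) ⁻¹' {k : ℕ | (0:Fin p → ℕ) + k • Pi.single i (1:ℕ) ∉ S}).Finite := by
      have hinj : Function.Injective (fun j : ℕ => j * m + 1) := by
        intro a b h
        simp only [add_left_inj] at h
        exact Nat.eq_of_mul_eq_mul_right (by omega) h
      exact Set.Finite.preimage hinj.injOn (line_finite hfin 0 i)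
    have hPn : ∃ k, (1 ≤ k ∧ ¬ m ∣ k) ∧ k • Pi.single i (1:ℕ) ∈ S := by
      obtain ⟨j, -, hj⟩ := exists_notmem_ge hA 0
      simp only [Set.mem_preimage, Set.mem_setOf_eq, not_not, zero_add] at hj
      refine ⟨j*m+1, ⟨by omega, ?_⟩, hj⟩
      intro hd
      have h1 : m ∣ 1 := by
        have h2 := Nat.dvd_sub hd (Dvd.intro_left j rfl)
        have h3 : j * m + 1 - j * m = 1 := by omega
        rwa [h3] at h2
      have := Nat.le_of_dvd one_pos h1
      omega
    set n := Nat.find hPn with hndef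
    obtain ⟨⟨hn1, hnd⟩, hnS⟩ := Nat.find_spec hPn
    rw [← hndef] at hn1 hnd hnS
    have hg2 : IsMinGen S (n • Pi.single i (1:ℕ)) := by
      refine axis_minGen hS i hn1 hnS ?_
      intro a b ha hb habk haS hbS
      by_cases hda : m ∣ a
      · by_cases hdb : m ∣ b
        · exact hnd (habk ▸ Nat.dvd_add hda hdb)
        · exact Nat.find_min hPn (show b < n by omega) ⟨⟨hb, hdb⟩, hbS⟩
      · exact Nat.find_min hPn (show a < n by omega) ⟨⟨ha, hda⟩, haS⟩
    refine ⟨m • Pi.single i (1:ℕ), n • Pi.single i (1:ℕ), hg1, hg2, ?_, ?_, ?_, ?_, ?_, ?_⟩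
    · simp
      omega
    · intro j hj
      simp [Pi.single_apply, hj]
    · simp
      omega
    · intro j hj hjS
      simp [Pi.single_apply, hj]
    · intro _ j hj
      simp [Pi.single_apply, hj]
    · intro h
      have hmn : m = n := by
        have := congrFun h i
        simpa using this
      refine hnd ?_
      rw [← hmn]

end Main

theorem stmt7 {p : ℕ} (hp : 1 ≤ p) (S : Set (Fin p → ℕ))
    (hS : IsSubmonoidSet S)
    (hfin : {x : Fin p → ℕ | x ∉ S}.Finite)
    (h0 : S ≠ {0})
    (huniv : S ≠ Set.univ) :
    2 * p ≤ (minGens S).ncard := by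
  classical
  have H := fun i => exists_two_gens hS hfin huniv i
  choose g₁ g₂ hm1 hm2 h1i h1z h2i h2z h2z' hne using H
  set f : Fin p ⊕ Fin p → (Fin p → ℕ) := Sum.elim g₁ g₂ with hfdef
  have hinj : Function.Injective f := by
    rintro (i|i) (i'|i') h <;>
      simp only [hfdef, Sum.elim_inl, Sum.elim_inr] at h
    · by_cases hii : i = i'
      · rw [hii]
      · exfalso
        have hc := congrFun h i'
        rw [h1z i i' (fun he => hii he.symm)] at hc
        have := h1i i'
        omega
    · exfalso
      by_cases hii : i = i'
      · subst hii
        exact hne i h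
      · have hc := congrFun h i'
        rw [h1z i i' (fun he => hii he.symm)] at hc
        have := h2i i'
        omega
    · exfalso
      by_cases hii : i = i'
      · subst hii
        exact hne i h.symm
      · have hc := congrFun h i
        rw [h1z i' i hii] at hc
        have := h2i i
        omega
    · by_cases hii : i = i'
      · rw [hii]
      · exfalso
        by_cases hiS : Pi.single i (1:ℕ) ∈ S
        · by_cases hi'S : Pi.single i' (1:ℕ) ∈ S
          · have hc := congrFun h i'
            rw [h2z i i' (fun he => hii he.symm) hi'S] at hc
            have := h2i i'
            omega
          · have hc := congrFun h i
            rw [h2z' i' hi'S i hii] at hc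
            have := h2i i
            omega
        · have hc := congrFun h i'
          rw [h2z' i hiS i' (fun he => hii he.symm)] at hc
          have := h2i i'
          omega
  obtain ⟨N, hNs⟩ : ∃ N : ℕ, ∀ b : Fin p → ℕ, b ∉ S → (∑ j, b j) ≤ N := by
    refine ⟨hfin.toFinset.sup (fun y => ∑ j, y j), fun b hb => ?_⟩
    exact Finset.le_sup (by rwa [Set.Finite.mem_toFinset])
  have hbound : ∀ x ∈ minGens S, ∀ i, x i ≤ g₁ i i + N := by
    intro x hx i
    by_contra hxi
    push_neg at hxi
    have hx' : IsMinGen S x := hx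
    obtain ⟨b, hbdef⟩ : ∃ b : Fin p → ℕ, ∀ j, b j = x j - g₁ i j :=
      ⟨fun j => x j - g₁ i j, fun _ => rfl⟩
    have hab : g₁ i + b = x := by
      funext j
      rw [Pi.add_apply, hbdef j]
      by_cases hj : j = i
      · rw [hj]
        omega
      · have := h1z i j hj
        omega
    have hbS : b ∈ S := by
      by_contra hbS
      have h1 : (∑ j, b j) ≤ N := hNs b hbS
      have h2 : b i ≤ ∑ j, b j :=
        Finset.single_le_sum (fun _ _ => Nat.zero_le _) (Finset.mem_univ i)
      have h3 := hbdef i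
      omega
    have hb0 : b ≠ 0 := by
      intro hb0
      have hc := congrFun hb0 i
      rw [hbdef i] at hc
      simp only [Pi.zero_apply] at hc
      omega
    have hg0 : g₁ i ≠ 0 := by
      intro hg
      have hc := congrFun hg i
      simp only [Pi.zero_apply] at hc
      have := h1i i
      omega
    exact hx'.2.2 (g₁ i) (hm1 i).1 b hbS hg0 hb0 hab
  have hfinG : (minGens S).Finite := by
    apply Set.Finite.subset (Set.finite_Iic (fun i => g₁ i i + N))
    intro x hx
    exact Set.mem_Iic.mpr (fun i => hbound x hx i)
  have hsub : Set.range f ⊆ minGens S := by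
    rintro _ ⟨(i|i), rfl⟩
    · exact hm1 i
    · exact hm2 i
  have hcard : (Set.range f).ncard = 2 * p := by
    rw [← Nat.card_coe_set_eq, Nat.card_range_of_injective hinj]
    simp [Nat.card_eq_fintype_card]
    omega
  calc 2 * p = (Set.range f).ncard := hcard.symm
    _ ≤ (minGens S).ncard := Set.ncard_le_ncard hsub hfinG
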